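/- arXiv:1803.07763 — 2 statements merged into one kernel-verified Lean document; each statement's English description precedes it below -/
import Mathlib

section
/- Suppose that for some integer k ∈ {1, …, d} and some k-dimensional orthogonal projection Π_k of ℝ^d there is a constant c < ∞ such that inf_{γ ∈ Γ(θ*, δ, Π_k)} Σ_{i=1}^d γ_i ≤ c·δ²·k for all δ > 0. Then there is a constant c_u (depending only on c) such that G(E_{θ*} ∩ B(δ)) ≤ c_u·δ·√k for all δ > 0. -/
open MeasureTheory ProbabilityTheory Metric Set Filter
open scoped BigOperators ENNReal NNReal RealInnerProductSpace Classical

noncomputable section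

namespace GaussKol

/-- The standard Gaussian measure on `EuclideanSpace ℝ (Fin d)`. -/
def stdGaussian (d : ℕ) : Measure (EuclideanSpace ℝ (Fin d)) :=
  (Measure.pi fun _ : Fin d => gaussianReal 0 1).map
    (MeasurableEquiv.toLp 2 (Fin d → ℝ))

/-- The Gaussian width of a set `S ⊆ ℝ^d`. -/
def gaussianWidth {d : ℕ} (S : Set (EuclideanSpace ℝ (Fin d))) : ℝ :=
  ∫ w, (⨆ u ∈ S, ⟪w, u⟫) ∂(stdGaussian d)

/-- The ellipse with aspect ratios `μ`. -/
def ellipse {d : ℕ} (μ : Fin d → ℝ) : Set (EuclideanSpace ℝ (Fin d)) :=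
  {θ | ∑ j, θ j ^ 2 / μ j ≤ 1}

/-- The squared elliptical norm. -/
def enormSq {d : ℕ} (μ : Fin d → ℝ) (θ : EuclideanSpace ℝ (Fin d)) : ℝ :=
  ∑ j, θ j ^ 2 / μ j

/-- The recentered ellipse `E_{θ*}`. -/
def shiftedEllipse {d : ℕ} (μ : Fin d → ℝ) (θs : EuclideanSpace ℝ (Fin d)) :
    Set (EuclideanSpace ℝ (Fin d)) :=
  (fun θ => θ - θs) '' ellipse μ

/-- Orthogonal projection onto a subspace, as a self-map of `ℝ^d`. -/
def projK {d : ℕ} (K : Submodule ℝ (EuclideanSpace ℝ (Fin d)))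
    (x : EuclideanSpace ℝ (Fin d)) : EuclideanSpace ℝ (Fin d) :=
  (Submodule.orthogonalProjectionOnto K x : EuclideanSpace ℝ (Fin d))

/-- The Kolmogorov `k`-width of a set `S ⊆ ℝ^d`. -/
def kolWidth {d : ℕ} (k : ℕ) (S : Set (EuclideanSpace ℝ (Fin d))) : ℝ :=
  ⨅ K : {K : Submodule ℝ (EuclideanSpace ℝ (Fin d)) // Module.finrank ℝ K = k},
    ⨆ θ ∈ S, ‖θ - projK K.1 θ‖

/-- The critical dimension `k(θ*, δ)`. -/
def critDim {d : ℕ} (η : ℝ) (μ : Fin d → ℝ) (θs : EuclideanSpace ℝ (Fin d)) (δ : ℝ) : ℕ :=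
  sInf {k : ℕ | 1 ≤ k ∧ k ≤ d ∧
    kolWidth k (shiftedEllipse μ θs ∩ closedBall 0 ((1 - η) * δ)) ≤ (9 / 10) * δ}

/-- The set `Γ(θ*, δ, Π_k)`. -/
def Gam {d : ℕ} (μ : Fin d → ℝ) (θs : EuclideanSpace ℝ (Fin d)) (δ : ℝ)
    (K : Submodule ℝ (EuclideanSpace ℝ (Fin d))) : Set (Fin d → ℝ) :=
  {γ | (∀ i, 0 < γ i) ∧
    ∀ Δ ∈ shiftedEllipse μ θs ∩ closedBall 0 δ,
      ∑ i, (Δ i - projK K Δ i) ^ 2 / γ i ≤ 1}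

/-- The function `Φ`. -/
def Phi {d : ℕ} (η : ℝ) (μ : Fin d → ℝ) (θs : EuclideanSpace ℝ (Fin d)) (δ : ℝ) : ℝ :=
  if ‖θs‖ / (1 - η) < δ then 1
  else min 1 (sInf {r : ℝ | 0 ≤ r ∧
    δ ^ 2 ≤ ((1 - η) ^ 2)⁻¹ * ∑ i, r ^ 2 * θs i ^ 2 / (r + μ i) ^ 2})

/-- `Φ⁻¹(x)`: the largest `δ > 0` with `Φ(δ) ≤ x` (equal to `∞` when unbounded). -/
def PhiInv {d : ℕ} (η : ℝ) (μ : Fin d → ℝ) (θs : EuclideanSpace ℝ (Fin d)) (x : ℝ) : ℝ≥0∞ :=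
  ⨆ (δ : ℝ) (_ : 0 < δ ∧ Phi η μ θs δ ≤ x), ENNReal.ofReal δ

/-- The `ε`-packing number of `S` in Euclidean distance. -/
def packingNumber {d : ℕ} (ε : ℝ) (S : Set (EuclideanSpace ℝ (Fin d))) : ℕ :=
  sSup {n : ℕ | ∃ T : Finset (EuclideanSpace ℝ (Fin d)),
    ↑T ⊆ S ∧ (∀ x ∈ T, ∀ y ∈ T, x ≠ y → ε < dist x y) ∧ T.card = n}

/-- Regularity of the ellipse at `θ*`, with explicit constant `c`. -/
def regularAtWith {d : ℕ} (η : ℝ) (μ : Fin d → ℝ) (θs : EuclideanSpace ℝ (Fin d))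
    (c : ℝ) : Prop :=
  ∀ δ : ℝ, 0 < δ →
    ∃ K : Submodule ℝ (EuclideanSpace ℝ (Fin d)),
      Module.finrank ℝ K = critDim η μ θs δ ∧
      (⨆ θ ∈ shiftedEllipse μ θs ∩ closedBall 0 ((1 - η) * δ), ‖θ - projK K θ‖)
        ≤ kolWidth (critDim η μ θs δ) (shiftedEllipse μ θs ∩ closedBall 0 ((1 - η) * δ)) ∧
      sInf ((fun γ : Fin d → ℝ => ∑ i, γ i) '' Gam μ θs δ K)
        ≤ c * δ ^ 2 * critDim η μ θs δ

/-- The minimax risk of estimation over the ellipse with noise level `σ`. -/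
def minimaxRisk (d : ℕ) (μ : Fin d → ℝ) (σ : ℝ) : ℝ :=
  ⨅ est : {f : EuclideanSpace ℝ (Fin d) → EuclideanSpace ℝ (Fin d) // Measurable f},
    ⨆ θs ∈ ellipse μ, ∫ w, ‖est.1 (θs + σ • w) - θs‖ ^ 2 ∂(stdGaussian d)

end GaussKol

open GaussKol

open Real in
section
open Real

namespace GWAux

lemma pdf_eq (x : ℝ) :
    gaussianPDFReal 0 1 x = (Real.sqrt (2 * π))⁻¹ * Real.exp (-(x ^ 2) / 2) := by
  simp [gaussianPDFReal]

lemma pdf_nonneg (x : ℝ) : 0 ≤ gaussianPDFReal 0 1 x := gaussianPDFReal_nonneg 0 1 x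

lemma const_le_one : (Real.sqrt (2 * π))⁻¹ ≤ 1 := by
  rw [inv_le_one_iff₀]
  right
  rw [show (1:ℝ) = Real.sqrt 1 by simp]
  exact Real.sqrt_le_sqrt (by nlinarith [Real.pi_gt_three])

lemma sq_bound (x : ℝ) : x ^ 2 * Real.exp (-(x ^ 2) / 2) ≤ 2 * Real.exp (-4⁻¹ * x ^ 2) := by
  have h := Real.add_one_le_exp (x ^ 2 / 8)
  have hE : (0:ℝ) < Real.exp (x ^ 2 / 8) := Real.exp_pos _
  have e2 : Real.exp (-(x ^ 2) / 2) = (Real.exp (x ^ 2 / 8) ^ 4)⁻¹ := by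
    rw [← Real.exp_nat_mul, ← Real.exp_neg]; ring_nf
  have e4 : Real.exp (-4⁻¹ * x ^ 2) = (Real.exp (x ^ 2 / 8) ^ 2)⁻¹ := by
    rw [← Real.exp_nat_mul, ← Real.exp_neg]; ring_nf
  rw [e2, e4]
  have key : x ^ 2 ≤ 2 * Real.exp (x ^ 2 / 8) ^ 2 := by nlinarith [sq_nonneg (x ^ 2 - 8)]
  calc x ^ 2 * (Real.exp (x ^ 2 / 8) ^ 4)⁻¹
      ≤ (2 * Real.exp (x ^ 2 / 8) ^ 2) * (Real.exp (x ^ 2 / 8) ^ 4)⁻¹ := by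
        gcongr
    _ = 2 * (Real.exp (x ^ 2 / 8) ^ 2)⁻¹ := by field_simp

lemma abs_bound (x : ℝ) : |x| * Real.exp (-(x ^ 2) / 2) ≤ 2 * Real.exp (-4⁻¹ * x ^ 2) := by
  have h := Real.add_one_le_exp (x ^ 2 / 8)
  have hE : (0:ℝ) < Real.exp (x ^ 2 / 8) := Real.exp_pos _
  have hE1 : (1:ℝ) ≤ Real.exp (x ^ 2 / 8) := by
    rw [show (1:ℝ) = Real.exp 0 by simp]; exact Real.exp_le_exp.2 (by positivity)
  have e2 : Real.exp (-(x ^ 2) / 2) = (Real.exp (x ^ 2 / 8) ^ 4)⁻¹ := by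
    rw [← Real.exp_nat_mul, ← Real.exp_neg]; ring_nf
  have e4 : Real.exp (-4⁻¹ * x ^ 2) = (Real.exp (x ^ 2 / 8) ^ 2)⁻¹ := by
    rw [← Real.exp_nat_mul, ← Real.exp_neg]; ring_nf
  rw [e2, e4]
  have key : |x| ≤ 2 * Real.exp (x ^ 2 / 8) ^ 2 := by
    nlinarith [sq_nonneg (|x| - 2), sq_abs x, abs_nonneg x]
  calc |x| * (Real.exp (x ^ 2 / 8) ^ 4)⁻¹
      ≤ (2 * Real.exp (x ^ 2 / 8) ^ 2) * (Real.exp (x ^ 2 / 8) ^ 4)⁻¹ := by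
        gcongr
    _ = 2 * (Real.exp (x ^ 2 / 8) ^ 2)⁻¹ := by field_simp

lemma bnd_integrable : Integrable (fun x : ℝ => 2 * Real.exp (-4⁻¹ * x ^ 2)) :=
  (integrable_exp_neg_mul_sq (by norm_num : (0:ℝ) < 4⁻¹)).const_mul 2

lemma integrable_iff (f : ℝ → ℝ) :
    Integrable f (gaussianReal 0 1) ↔
      Integrable (fun x => f x * gaussianPDFReal 0 1 x) volume := by
  rw [gaussianReal_of_var_ne_zero 0 one_ne_zero]
  rw [integrable_withDensity_iff (measurable_gaussianPDF 0 1)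
    (Filter.Eventually.of_forall fun x => ENNReal.ofReal_lt_top)]
  simp_rw [gaussianPDF, ENNReal.toReal_ofReal (pdf_nonneg _)]

lemma integral_eq (f : ℝ → ℝ) :
    ∫ t, f t ∂(gaussianReal 0 1) = ∫ x, gaussianPDFReal 0 1 x * f x := by
  rw [gaussianReal_of_var_ne_zero 0 one_ne_zero]
  have : (gaussianPDF 0 1) = fun x => ((fun y => (gaussianPDFReal 0 1 y).toNNReal) x : ℝ≥0∞) := rfl
  rw [this, integral_withDensity_eq_integral_smul
    ((measurable_gaussianPDFReal 0 1).real_toNNReal)]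
  congr 1 with x
  simp [NNReal.smul_def, Real.coe_toNNReal _ (pdf_nonneg x)]

lemma sqpdf_bound (x : ℝ) :
    |x ^ 2 * gaussianPDFReal 0 1 x| ≤ 2 * Real.exp (-4⁻¹ * x ^ 2) := by
  rw [abs_of_nonneg (mul_nonneg (sq_nonneg x) (pdf_nonneg x))]
  rw [pdf_eq]
  calc x ^ 2 * ((Real.sqrt (2 * π))⁻¹ * Real.exp (-(x ^ 2) / 2))
      = (Real.sqrt (2 * π))⁻¹ * (x ^ 2 * Real.exp (-(x ^ 2) / 2)) := by ring
    _ ≤ 1 * (x ^ 2 * Real.exp (-(x ^ 2) / 2)) :=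
        mul_le_mul_of_nonneg_right const_le_one
          (mul_nonneg (sq_nonneg x) (Real.exp_pos _).le)
    _ = x ^ 2 * Real.exp (-(x ^ 2) / 2) := one_mul _
    _ ≤ 2 * Real.exp (-4⁻¹ * x ^ 2) := sq_bound x

lemma abspdf_bound (x : ℝ) :
    |x * gaussianPDFReal 0 1 x| ≤ 2 * Real.exp (-4⁻¹ * x ^ 2) := by
  rw [abs_mul, abs_of_nonneg (pdf_nonneg x), pdf_eq]
  calc |x| * ((Real.sqrt (2 * π))⁻¹ * Real.exp (-(x ^ 2) / 2))
      = (Real.sqrt (2 * π))⁻¹ * (|x| * Real.exp (-(x ^ 2) / 2)) := by ring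
    _ ≤ 1 * (|x| * Real.exp (-(x ^ 2) / 2)) :=
        mul_le_mul_of_nonneg_right const_le_one
          (mul_nonneg (abs_nonneg x) (Real.exp_pos _).le)
    _ = |x| * Real.exp (-(x ^ 2) / 2) := one_mul _
    _ ≤ 2 * Real.exp (-4⁻¹ * x ^ 2) := abs_bound x

lemma int_sq : Integrable (fun t : ℝ => t ^ 2) (gaussianReal 0 1) := by
  rw [integrable_iff]
  refine bnd_integrable.mono'
    ((measurable_id.pow_const 2).mul (measurable_gaussianPDFReal 0 1)).aestronglyMeasurable
    (Filter.Eventually.of_forall fun x => sqpdf_bound x)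

lemma int_id : Integrable (fun t : ℝ => t) (gaussianReal 0 1) := by
  rw [integrable_iff]
  refine bnd_integrable.mono'
    (measurable_id.mul (measurable_gaussianPDFReal 0 1)).aestronglyMeasurable
    (Filter.Eventually.of_forall fun x => abspdf_bound x)

lemma m2_nonneg : 0 ≤ ∫ t, t ^ 2 ∂(gaussianReal 0 1) :=
  integral_nonneg fun t => sq_nonneg t

lemma m2_le : ∫ t, t ^ 2 ∂(gaussianReal 0 1) ≤ 8 := by
  rw [integral_eq]
  have h1 : ∫ x, gaussianPDFReal 0 1 x * x ^ 2 ≤ ∫ x : ℝ, 2 * Real.exp (-4⁻¹ * x ^ 2) := by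
    refine integral_mono_of_nonneg
      (Filter.Eventually.of_forall fun x => mul_nonneg (pdf_nonneg x) (sq_nonneg x))
      bnd_integrable (Filter.Eventually.of_forall fun x => ?_)
    calc gaussianPDFReal 0 1 x * x ^ 2 = x ^ 2 * gaussianPDFReal 0 1 x := by ring
      _ ≤ 2 * Real.exp (-4⁻¹ * x ^ 2) := (le_abs_self _).trans (sqpdf_bound x)
  refine h1.trans ?_
  rw [MeasureTheory.integral_const_mul, integral_gaussian]
  have h16 : Real.sqrt 16 = 4 := by
    rw [show (16:ℝ) = 4 ^ 2 by norm_num, Real.sqrt_sq (by norm_num : (0:ℝ) ≤ 4)]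
  have h4 : Real.sqrt (π / 4⁻¹) ≤ 4 := by
    have := Real.sqrt_le_sqrt (show π / 4⁻¹ ≤ 16 by rw [div_eq_mul_inv, inv_inv]; nlinarith [Real.pi_le_four])
    rwa [h16] at this
  linarith

lemma mean_zero : ∫ t : ℝ, t ∂(gaussianReal 0 1) = 0 := by
  have hmap : (gaussianReal 0 1).map (fun t : ℝ => -1 * t) = gaussianReal 0 1 := by
    rw [show (fun t : ℝ => -1 * t) = ((-1 : ℝ) * ·) from rfl, gaussianReal_map_const_mul]
    have h1 : (⟨(-1:ℝ) ^ 2, sq_nonneg _⟩ : ℝ≥0) = 1 := by ext; norm_num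
    simp only [mul_zero, mul_one]
    exact congrArg (gaussianReal 0) h1
  have h1 : ∫ t : ℝ, t ∂(gaussianReal 0 1) = ∫ t : ℝ, -1 * t ∂(gaussianReal 0 1) := by
    conv_lhs => rw [← hmap]
    exact integral_map (f := fun t : ℝ => t)
      ((measurable_id.const_mul (-1 : ℝ)).aemeasurable) measurable_id.aestronglyMeasurable
  have h2 : ∫ t : ℝ, -1 * t ∂(gaussianReal 0 1) = -∫ t : ℝ, t ∂(gaussianReal 0 1) := by
    rw [show (fun t : ℝ => -1 * t) = fun t : ℝ => -t by funext t; ring]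
    exact integral_neg _
  linarith

end GWAux

namespace GWAux2

variable {d : ℕ}

local notation "gms" => (MeasureSpace.mk (gaussianReal 0 1) : MeasureSpace ℝ)

/-- Fubini for products of coordinate functions over the standard Gaussian product measure. -/
lemma pi_prod_integral (f : Fin d → ℝ → ℝ) :
    ∫ x : Fin d → ℝ, ∏ i, f i (x i) ∂(Measure.pi fun _ => gaussianReal 0 1)
      = ∏ i, ∫ t, f i t ∂(gaussianReal 0 1) :=
  MeasureTheory.integral_fin_nat_prod_eq_prod (μ := fun _ => gaussianReal 0 1) f

lemma pi_prod_integrable {f : Fin d → ℝ → ℝ}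
    (hf : ∀ i, Integrable (f i) (gaussianReal 0 1)) :
    Integrable (fun x : Fin d → ℝ => ∏ i, f i (x i))
      (Measure.pi fun _ => gaussianReal 0 1) :=
  MeasureTheory.Integrable.fin_nat_prod (μ := fun _ => gaussianReal 0 1) hf

lemma coord_integral (f : ℝ → ℝ) (i : Fin d) :
    ∫ x : Fin d → ℝ, f (x i) ∂(Measure.pi fun _ => gaussianReal 0 1)
      = ∫ t, f t ∂(gaussianReal 0 1) := by
  have h := pi_prod_integral (d := d) (fun j t => if j = i then f t else 1)
  have hL : ∀ x : Fin d → ℝ, (∏ j, if j = i then f (x j) else 1) = f (x i) := by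
    intro x
    rw [Finset.prod_eq_single i (fun j _ hj => if_neg hj) (by simp)]
    simp
  have hR : (∏ j, ∫ t, (if j = i then f t else 1) ∂(gaussianReal 0 1))
      = ∫ t, f t ∂(gaussianReal 0 1) := by
    rw [Finset.prod_eq_single i (fun j _ hj => by simp [if_neg hj]) (by simp)]
    simp
  simp_rw [hL] at h
  rw [h, hR]

lemma coord_integrable {f : ℝ → ℝ} (hf : Integrable f (gaussianReal 0 1)) (i : Fin d) :
    Integrable (fun x : Fin d → ℝ => f (x i)) (Measure.pi fun _ => gaussianReal 0 1) := by
  have h := pi_prod_integrable (d := d) (f := fun j t => if j = i then f t else 1)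
    (fun j => by by_cases hj : j = i <;> simp [hj, hf, integrable_const])
  have hL : ∀ x : Fin d → ℝ, (∏ j, if j = i then f (x j) else 1) = f (x i) := by
    intro x
    rw [Finset.prod_eq_single i (fun j _ hj => if_neg hj) (by simp)]
    simp
  simpa [funext hL] using h

lemma cross_fun (i j : Fin d) (hij : i ≠ j) (x : Fin d → ℝ) :
    (∏ m, (if m = i then x m else if m = j then x m else 1)) = x i * x j := by
  rw [← Finset.mul_prod_erase Finset.univ _ (Finset.mem_univ i),
    ← Finset.mul_prod_erase _ _
      (Finset.mem_erase.2 ⟨hij.symm, Finset.mem_univ j⟩)]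
  rw [Finset.prod_eq_one (fun m hm => ?_)]
  · simp [hij.symm, hij]
  · rcases Finset.mem_erase.1 hm with ⟨hmj, hm'⟩
    rcases Finset.mem_erase.1 hm' with ⟨hmi, _⟩
    simp [hmi, hmj]

lemma cross_integral (i j : Fin d) (hij : i ≠ j) :
    ∫ x : Fin d → ℝ, x i * x j ∂(Measure.pi fun _ => gaussianReal 0 1) = 0 := by
  have h := pi_prod_integral (d := d)
    (fun m t => if m = i then t else if m = j then t else 1)
  simp_rw [cross_fun i j hij] at h
  rw [h, Finset.prod_eq_zero (Finset.mem_univ i)]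
  simpa using GWAux.mean_zero

lemma cross_integrable (i j : Fin d) :
    Integrable (fun x : Fin d → ℝ => x i * x j)
      (Measure.pi fun _ => gaussianReal 0 1) := by
  by_cases hij : i = j
  · subst hij
    have := coord_integrable (d := d) GWAux.int_sq i
    simpa [sq] using this
  · have h := pi_prod_integrable (d := d)
      (f := fun m t => if m = i then t else if m = j then t else 1)
      (fun m => by
        by_cases hmi : m = i
        · simpa [hmi] using GWAux.int_id
        · by_cases hmj : m = j
          · simpa [hmi, hmj] using GWAux.int_id
          · simp [hmi, hmj, integrable_const])
    simpa [funext (cross_fun i j hij)] using h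

/-- second moment of a linear functional -/
lemma lin_sq_integrable (v : Fin d → ℝ) :
    Integrable (fun x : Fin d → ℝ => (∑ i, v i * x i) ^ 2)
      (Measure.pi fun _ => gaussianReal 0 1) := by
  have : (fun x : Fin d → ℝ => (∑ i, v i * x i) ^ 2)
      = fun x => ∑ i, ∑ j, (v i * v j) * (x i * x j) := by
    funext x
    rw [sq, Finset.sum_mul_sum]
    congr 1 with i
    congr 1 with j
    ring
  rw [this]
  exact integrable_finset_sum _ fun i _ => integrable_finset_sum _ fun j _ =>
    (cross_integrable i j).const_mul _

lemma lin_sq_integral (v : Fin d → ℝ) :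
    ∫ x : Fin d → ℝ, (∑ i, v i * x i) ^ 2 ∂(Measure.pi fun _ => gaussianReal 0 1)
      = (∑ i, (v i) ^ 2) * ∫ t, t ^ 2 ∂(gaussianReal 0 1) := by
  have hfun : (fun x : Fin d → ℝ => (∑ i, v i * x i) ^ 2)
      = fun x => ∑ i, ∑ j, (v i * v j) * (x i * x j) := by
    funext x
    rw [sq, Finset.sum_mul_sum]
    congr 1 with i
    congr 1 with j
    ring
  rw [hfun]
  rw [integral_finset_sum _ fun i _ => integrable_finset_sum _ fun j _ =>
    (cross_integrable i j).const_mul _]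
  have : ∀ i : Fin d, ∫ x : Fin d → ℝ, ∑ j, (v i * v j) * (x i * x j)
      ∂(Measure.pi fun _ => gaussianReal 0 1)
      = (v i) ^ 2 * ∫ t, t ^ 2 ∂(gaussianReal 0 1) := by
    intro i
    rw [integral_finset_sum _ fun j _ => (cross_integrable i j).const_mul _]
    rw [Finset.sum_eq_single i ?h1 (by simp)]
    · rw [integral_const_mul]
      have : ∫ x : Fin d → ℝ, x i * x i ∂(Measure.pi fun _ => gaussianReal 0 1)
          = ∫ t, t ^ 2 ∂(gaussianReal 0 1) := by
        have := coord_integral (d := d) (fun t => t ^ 2) i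
        rw [← this]
        congr 1 with x
        ring
      rw [this]
      ring
    · intro j _ hji
      rw [integral_const_mul, cross_integral i j (Ne.symm hji), mul_zero]
  simp_rw [this]
  rw [← Finset.sum_mul]

lemma jensen_sqrt {α : Type*} [MeasurableSpace α] (μ : Measure α) [IsProbabilityMeasure μ]
    {h : α → ℝ} (h0 : ∀ x, 0 ≤ h x) (hm : AEStronglyMeasurable h μ)
    (hi : Integrable (fun x => h x ^ 2) μ) :
    ∫ x, h x ∂μ ≤ Real.sqrt (∫ x, h x ^ 2 ∂μ) := by
  have hint : Integrable h μ := by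
    refine ((integrable_const (1:ℝ)).add hi).mono' hm (Filter.Eventually.of_forall fun x => ?_)
    simp only [Pi.add_apply, Real.norm_eq_abs, abs_of_nonneg (h0 x)]
    nlinarith [sq_nonneg (h x - 1)]
  set a := ∫ x, h x ∂μ with ha
  have ha0 : 0 ≤ a := integral_nonneg h0
  have hexp : ∫ x, (h x - a) ^ 2 ∂μ = (∫ x, h x ^ 2 ∂μ) - a ^ 2 := by
    have he : ∀ x, (h x - a) ^ 2 = h x ^ 2 - (2 * a) * h x + a ^ 2 := fun x => by ring
    simp_rw [he]
    have hi2 : Integrable (fun x => 2 * a * h x) μ := hint.const_mul (2 * a)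
    have hi1 : Integrable (fun x => h x ^ 2 - 2 * a * h x) μ := hi.sub hi2
    rw [integral_add hi1 (integrable_const _), integral_sub hi hi2,
      integral_const_mul, integral_const]
    simp only [measure_univ, probReal_univ, ENNReal.toReal_one, smul_eq_mul, one_mul]
    rw [← ha]
    ring
  have hnn : 0 ≤ ∫ x, (h x - a) ^ 2 ∂μ := integral_nonneg fun x => sq_nonneg _
  have key : a ^ 2 ≤ ∫ x, h x ^ 2 ∂μ := by linarith
  calc a = Real.sqrt (a ^ 2) := (Real.sqrt_sq ha0).symm
    _ ≤ _ := Real.sqrt_le_sqrt key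

section Geom
open scoped RealInnerProductSpace

lemma normsq_proj {d : ℕ} (K : Submodule ℝ (EuclideanSpace ℝ (Fin d)))
    (x : EuclideanSpace ℝ (Fin d)) :
    ‖(Submodule.orthogonalProjectionOnto K x : EuclideanSpace ℝ (Fin d))‖ ^ 2
      = ∑ j, ⟪((stdOrthonormalBasis ℝ K j : K) : EuclideanSpace ℝ (Fin d)), x⟫ ^ 2 := by
  set b := stdOrthonormalBasis ℝ K with hb
  have hon : Orthonormal ℝ (fun j => ((b j : K) : EuclideanSpace ℝ (Fin d))) :=
    b.orthonormal.comp_linearIsometry K.subtypeₗᵢ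
  have hP : (Submodule.orthogonalProjectionOnto K x : EuclideanSpace ℝ (Fin d))
      = ∑ j, ⟪((b j : K) : EuclideanSpace ℝ (Fin d)), x⟫ • ((b j : K) : EuclideanSpace ℝ (Fin d)) := by
    rw [b.orthogonalProjectionOnto_apply_eq_sum x]
    push_cast
    rfl
  rw [hP]
  have := hon.inner_sum (fun j => ⟪((b j : K) : EuclideanSpace ℝ (Fin d)), x⟫)
    (fun j => ⟪((b j : K) : EuclideanSpace ℝ (Fin d)), x⟫) Finset.univ
  rw [← real_inner_self_eq_norm_sq, this]
  simp [sq]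

lemma coe_norm_one {d : ℕ} (K : Submodule ℝ (EuclideanSpace ℝ (Fin d))) (j) :
    ‖((stdOrthonormalBasis ℝ K j : K) : EuclideanSpace ℝ (Fin d))‖ = 1 := by
  rw [Submodule.norm_coe]
  exact (stdOrthonormalBasis ℝ K).orthonormal.1 j

lemma proj_sub_norm_le {d : ℕ} (K : Submodule ℝ (EuclideanSpace ℝ (Fin d)))
    (u : EuclideanSpace ℝ (Fin d)) :
    ‖u - (Submodule.orthogonalProjectionOnto K u : EuclideanSpace ℝ (Fin d))‖ ≤ ‖u‖ := by
  rw [show u - (Submodule.orthogonalProjectionOnto K u : EuclideanSpace ℝ (Fin d))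
      = (Submodule.orthogonalProjectionOnto Kᗮ u : EuclideanSpace ℝ (Fin d)) from
    (Submodule.starProjection_orthogonal_val (K := K) u).symm]
  calc ‖(Submodule.orthogonalProjectionOnto Kᗮ u : EuclideanSpace ℝ (Fin d))‖
      = ‖Submodule.orthogonalProjectionOnto Kᗮ u‖ := Submodule.norm_coe _
    _ ≤ ‖Submodule.orthogonalProjectionOnto Kᗮ‖ * ‖u‖ := (Submodule.orthogonalProjectionOnto Kᗮ).le_opNorm u
    _ ≤ 1 * ‖u‖ := mul_le_mul_of_nonneg_right (Submodule.orthogonalProjectionOnto_norm_le _) (norm_nonneg u)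
    _ = ‖u‖ := one_mul _

end Geom

end GWAux2

end

set_option maxHeartbeats 2000000 in
theorem regular_gaussian_width_upper_bound_aux (c : ℝ) :
    ∃ c_u : ℝ, 0 < c_u ∧
      ∀ (d : ℕ) (μ : Fin d → ℝ), (∀ i, 0 < μ i) → (∀ i j : Fin d, i ≤ j → μ j ≤ μ i) →
        ∀ θs : EuclideanSpace ℝ (Fin d), θs ∈ ellipse μ →
        ∀ k : ℕ, 1 ≤ k → k ≤ d →
        ∀ K : Submodule ℝ (EuclideanSpace ℝ (Fin d)), Module.finrank ℝ K = k →
        (∀ δ : ℝ, 0 < δ →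
          sInf ((fun γ : Fin d → ℝ => ∑ i, γ i) '' Gam μ θs δ K) ≤ c * δ ^ 2 * k) →
        ∀ δ : ℝ, 0 < δ →
          gaussianWidth (shiftedEllipse μ θs ∩ closedBall 0 δ) ≤ c_u * δ * Real.sqrt k := by

  refine ⟨3 * (1 + Real.sqrt (|c| + 1)), by positivity, ?_⟩
  intro d μ hμpos hμmono θs hθs k hk1 hkd K hK hreg δ hδ
  classical
  set S := shiftedEllipse μ θs ∩ closedBall (0 : EuclideanSpace ℝ (Fin d)) δ with hSdef
  have hd1 : 1 ≤ d := hk1.trans hkd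
  have hk0 : (0:ℝ) < (k:ℝ) := by exact_mod_cast hk1
  -- 0 ∈ S
  have h0S : (0 : EuclideanSpace ℝ (Fin d)) ∈ S :=
    ⟨⟨θs, hθs, sub_self θs⟩, mem_closedBall_self hδ.le⟩
  -- Γ is nonempty
  have hΓne : ∀ δ' : ℝ, 0 < δ' → (Gam μ θs δ' K).Nonempty := by
    intro δ' hδ'
    have hdpos : (0:ℝ) < (d:ℝ) := by exact_mod_cast hd1
    refine ⟨fun _ => (d:ℝ) * δ' ^ 2, fun i => by positivity, ?_⟩
    intro Δ hΔ
    have hnorm : ∑ i, (Δ i - projK K Δ i) ^ 2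
        = ‖Δ - (Submodule.orthogonalProjectionOnto K Δ : EuclideanSpace ℝ (Fin d))‖ ^ 2 := by
      rw [EuclideanSpace.norm_eq, Real.sq_sqrt (by positivity)]
      congr 1 with i
      rw [Real.norm_eq_abs, sq_abs]
      simp [projK]
    have hle : ‖Δ - (Submodule.orthogonalProjectionOnto K Δ : EuclideanSpace ℝ (Fin d))‖ ≤ δ' := by
      refine (GWAux2.proj_sub_norm_le K Δ).trans ?_
      exact mem_closedBall_zero_iff.1 hΔ.2
    have hsum : ∑ i, (Δ i - projK K Δ i) ^ 2 / ((d:ℝ) * δ' ^ 2)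
        = (∑ i, (Δ i - projK K Δ i) ^ 2) / ((d:ℝ) * δ' ^ 2) := by
      rw [Finset.sum_div]
    rw [hsum, div_le_one (by positivity), hnorm]
    calc ‖Δ - (Submodule.orthogonalProjectionOnto K Δ : EuclideanSpace ℝ (Fin d))‖ ^ 2
        ≤ δ' ^ 2 := by nlinarith [norm_nonneg (Δ - (Submodule.orthogonalProjectionOnto K Δ : EuclideanSpace ℝ (Fin d)))]
      _ ≤ (d:ℝ) * δ' ^ 2 := by
          nlinarith [sq_nonneg δ', (by exact_mod_cast hd1 : (1:ℝ) ≤ (d:ℝ))]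
  -- sInf is nonneg
  have hInf0 : ∀ δ' : ℝ, 0 ≤ sInf ((fun γ : Fin d → ℝ => ∑ i, γ i) '' Gam μ θs δ' K) := by
    intro δ'
    refine Real.sInf_nonneg ?_
    rintro y ⟨γ, hγ, rfl⟩
    exact Finset.sum_nonneg fun i _ => (hγ.1 i).le
  have hc0 : 0 ≤ c := by
    have h1 := (hInf0 1).trans (hreg 1 one_pos)
    nlinarith [hk0]
  -- pick γ
  obtain ⟨y, ⟨γ, hγΓ, rfl⟩, hylt⟩ :
      ∃ y ∈ (fun γ : Fin d → ℝ => ∑ i, γ i) '' Gam μ θs δ K,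
        y < (c + 1) * δ ^ 2 * k := by
    refine exists_lt_of_csInf_lt ((hΓne δ hδ).image _) ?_
    refine lt_of_le_of_lt (hreg δ hδ) ?_
    nlinarith [mul_pos (pow_pos hδ 2) hk0]
  have hγsum : ∑ i, γ i ≤ (c + 1) * δ ^ 2 * (k:ℝ) := hylt.le
  -- measures
  set Pm := (Measure.pi fun _ : Fin d => gaussianReal 0 1) with hPm
  set e := (MeasurableEquiv.toLp 2 (Fin d → ℝ)).symm with he
  set m2 := ∫ t : ℝ, t ^ 2 ∂(gaussianReal 0 1) with hm2
  have hm2le : m2 ≤ 8 := GWAux.m2_le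
  have hm20 : 0 ≤ m2 := GWAux.m2_nonneg
  have hcoord : ∀ (x : Fin d → ℝ) (i : Fin d), (e.symm x) i = x i := fun _ _ => rfl
  -- the two dominating functions
  set q1 : (Fin d → ℝ) → ℝ :=
    fun x => ‖(Submodule.orthogonalProjectionOnto K (e.symm x) : EuclideanSpace ℝ (Fin d))‖ with hq1
  set q2 : (Fin d → ℝ) → ℝ := fun x => Real.sqrt (∑ i, γ i * (x i) ^ 2) with hq2
  have hq1nn : ∀ x, 0 ≤ q1 x := fun x => norm_nonneg _
  have hq2nn : ∀ x, 0 ≤ q2 x := fun x => Real.sqrt_nonneg _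
  have hqnn : ∀ x, 0 ≤ δ * q1 x + q2 x :=
    fun x => add_nonneg (mul_nonneg hδ.le (hq1nn x)) (hq2nn x)
  -- pointwise domination of the sup
  have hdom : ∀ x : Fin d → ℝ, (⨆ u ∈ S, ⟪e.symm x, u⟫) ≤ δ * q1 x + q2 x := by
    intro x
    refine Real.iSup_le (fun u => Real.iSup_le (fun hu => ?_) (hqnn x)) (hqnn x)
    obtain ⟨huS, huB⟩ := hu
    have hunorm : ‖u‖ ≤ δ := mem_closedBall_zero_iff.1 huB
    have hsplit : ⟪e.symm x, u⟫
        = ⟪e.symm x, (Submodule.orthogonalProjectionOnto K u : EuclideanSpace ℝ (Fin d))⟫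
          + ⟪e.symm x, u - (Submodule.orthogonalProjectionOnto K u : EuclideanSpace ℝ (Fin d))⟫ := by
      rw [← inner_add_right, add_sub_cancel]
    have ht1 : ⟪e.symm x, (Submodule.orthogonalProjectionOnto K u : EuclideanSpace ℝ (Fin d))⟫
        ≤ δ * q1 x := by
      rw [show ⟪e.symm x, (Submodule.orthogonalProjectionOnto K u : EuclideanSpace ℝ (Fin d))⟫
          = ⟪(Submodule.orthogonalProjectionOnto K (e.symm x) : EuclideanSpace ℝ (Fin d)), u⟫ from
        (Submodule.inner_starProjection_left_eq_right K _ _).symm]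
      calc ⟪(Submodule.orthogonalProjectionOnto K (e.symm x) : EuclideanSpace ℝ (Fin d)), u⟫
          ≤ ‖(Submodule.orthogonalProjectionOnto K (e.symm x) : EuclideanSpace ℝ (Fin d))‖ * ‖u‖ :=
            real_inner_le_norm _ _
        _ ≤ q1 x * δ := mul_le_mul_of_nonneg_left hunorm (hq1nn x)
        _ = δ * q1 x := mul_comm _ _
    have ht2 : ⟪e.symm x, u - (Submodule.orthogonalProjectionOnto K u : EuclideanSpace ℝ (Fin d))⟫
        ≤ q2 x := by
      have hinner : ⟪e.symm x, u - (Submodule.orthogonalProjectionOnto K u : EuclideanSpace ℝ (Fin d))⟫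
          = ∑ i, x i * (u i - projK K u i) := by
        rw [PiLp.inner_apply]
        refine Finset.sum_congr rfl fun i _ => ?_
        simp only [RCLike.inner_apply, conj_trivial, PiLp.sub_apply, hcoord, projK]
        ring
      rw [hinner]
      have hγle : ∑ i, (u i - projK K u i) ^ 2 / γ i ≤ 1 := hγΓ.2 u ⟨huS, huB⟩
      have hCS : (∑ i, x i * (u i - projK K u i)) ^ 2
          ≤ (∑ i, γ i * (x i) ^ 2) * (∑ i, (u i - projK K u i) ^ 2 / γ i) := by
        have h := Finset.sum_mul_sq_le_sq_mul_sq Finset.univ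
          (fun i => Real.sqrt (γ i) * x i)
          (fun i => (u i - projK K u i) / Real.sqrt (γ i))
        have h1 : ∀ i : Fin d, Real.sqrt (γ i) * x i * ((u i - projK K u i) / Real.sqrt (γ i))
            = x i * (u i - projK K u i) := by
          intro i
          have : Real.sqrt (γ i) ≠ 0 := ne_of_gt (Real.sqrt_pos.2 (hγΓ.1 i))
          field_simp
        have h2 : ∀ i : Fin d, (Real.sqrt (γ i) * x i) ^ 2 = γ i * (x i) ^ 2 := by
          intro i
          rw [mul_pow, Real.sq_sqrt (hγΓ.1 i).le]
        have h3 : ∀ i : Fin d, ((u i - projK K u i) / Real.sqrt (γ i)) ^ 2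
            = (u i - projK K u i) ^ 2 / γ i := by
          intro i
          rw [div_pow, Real.sq_sqrt (hγΓ.1 i).le]
        simp_rw [h1, h2, h3] at h
        exact h
      have hQ : (∑ i, x i * (u i - projK K u i)) ^ 2 ≤ q2 x ^ 2 := by
        rw [hq2, Real.sq_sqrt (Finset.sum_nonneg fun i _ =>
          mul_nonneg (hγΓ.1 i).le (sq_nonneg _))]
        calc (∑ i, x i * (u i - projK K u i)) ^ 2
            ≤ (∑ i, γ i * (x i) ^ 2) * (∑ i, (u i - projK K u i) ^ 2 / γ i) := hCS
          _ ≤ (∑ i, γ i * (x i) ^ 2) * 1 := by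
              refine mul_le_mul_of_nonneg_left hγle ?_
              exact Finset.sum_nonneg fun i _ => mul_nonneg (hγΓ.1 i).le (sq_nonneg _)
          _ = _ := mul_one _
      calc ∑ i, x i * (u i - projK K u i)
          ≤ |∑ i, x i * (u i - projK K u i)| := le_abs_self _
        _ = Real.sqrt ((∑ i, x i * (u i - projK K u i)) ^ 2) := (Real.sqrt_sq_eq_abs _).symm
        _ ≤ Real.sqrt (q2 x ^ 2) := Real.sqrt_le_sqrt hQ
        _ = q2 x := Real.sqrt_sq (hq2nn x)
    rw [hsplit]
    linarith
  -- nonnegativity of the sup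
  have hFnn : ∀ x : Fin d → ℝ, 0 ≤ ⨆ u ∈ S, ⟪e.symm x, u⟫ := by
    intro x
    have hbdd : BddAbove (Set.range fun u => ⨆ _ : u ∈ S, ⟪e.symm x, u⟫) := by
      refine ⟨‖e.symm x‖ * δ, ?_⟩
      rintro y ⟨u, rfl⟩
      refine Real.iSup_le (fun hu => ?_) (mul_nonneg (norm_nonneg _) hδ.le)
      exact (real_inner_le_norm _ _).trans
        (mul_le_mul_of_nonneg_left (mem_closedBall_zero_iff.1 hu.2) (norm_nonneg _))
    have h0 : (⨆ _ : (0 : EuclideanSpace ℝ (Fin d)) ∈ S, ⟪e.symm x, (0 : EuclideanSpace ℝ (Fin d))⟫) = 0 := by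
      rw [ciSup_pos h0S, inner_zero_right]
    calc (0:ℝ) = ⨆ _ : (0 : EuclideanSpace ℝ (Fin d)) ∈ S, ⟪e.symm x, (0 : EuclideanSpace ℝ (Fin d))⟫ := h0.symm
      _ ≤ ⨆ u ∈ S, ⟪e.symm x, u⟫ := le_ciSup hbdd 0
  -- integrability of q1
  have hq1meas : AEStronglyMeasurable q1 Pm := by
    have hc : Continuous fun u : EuclideanSpace ℝ (Fin d) =>
        ‖(Submodule.orthogonalProjectionOnto K u : EuclideanSpace ℝ (Fin d))‖ :=
      continuous_norm.comp (continuous_subtype_val.comp (Submodule.orthogonalProjectionOnto K).continuous)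
    exact (hc.measurable.comp e.symm.measurable).aestronglyMeasurable
  have hq1int : Integrable q1 Pm := by
    refine Integrable.mono' (g := fun x => ∑ i, |x i|) ?_ hq1meas
      (Filter.Eventually.of_forall fun x => ?_)
    · exact integrable_finset_sum _ fun i _ => GWAux2.coord_integrable GWAux.int_id.abs i
    · rw [Real.norm_eq_abs, abs_of_nonneg (hq1nn x)]
      have h1 : q1 x ≤ ‖e.symm x‖ := by
        calc q1 x = ‖(Submodule.orthogonalProjectionOnto K (e.symm x) : EuclideanSpace ℝ (Fin d))‖ := rfl
          _ = ‖Submodule.orthogonalProjectionOnto K (e.symm x)‖ := Submodule.norm_coe _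
          _ ≤ ‖Submodule.orthogonalProjectionOnto K‖ * ‖e.symm x‖ := (Submodule.orthogonalProjectionOnto K).le_opNorm _
          _ ≤ 1 * ‖e.symm x‖ :=
              mul_le_mul_of_nonneg_right (Submodule.orthogonalProjectionOnto_norm_le _) (norm_nonneg _)
          _ = ‖e.symm x‖ := one_mul _
      refine h1.trans ?_
      rw [EuclideanSpace.norm_eq]
      have h2 : ∑ i, ‖(e.symm x) i‖ ^ 2 ≤ (∑ i, |x i|) ^ 2 := by
        have := Finset.sum_sq_le_sq_sum_of_nonneg
          (f := fun i : Fin d => |x i|) (s := Finset.univ) (fun i _ => abs_nonneg _)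
        simpa [hcoord, sq_abs] using this
      calc Real.sqrt (∑ i, ‖(e.symm x) i‖ ^ 2) ≤ Real.sqrt ((∑ i, |x i|) ^ 2) :=
            Real.sqrt_le_sqrt h2
        _ = abs (∑ i, |x i|) := Real.sqrt_sq_eq_abs _
        _ = ∑ i, |x i| := abs_of_nonneg (Finset.sum_nonneg fun i _ => abs_nonneg _)
  -- integrability of q2
  have hq2meas : AEStronglyMeasurable q2 Pm := by
    have : Measurable fun x : Fin d → ℝ => ∑ i, γ i * (x i) ^ 2 :=
      Finset.measurable_sum _ fun i _ => ((measurable_pi_apply i).pow_const 2).const_mul _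
    exact (Real.continuous_sqrt.measurable.comp this).aestronglyMeasurable
  have hq2sqint : Integrable (fun x : Fin d → ℝ => ∑ i, γ i * (x i) ^ 2) Pm :=
    integrable_finset_sum _ fun i _ => (GWAux2.coord_integrable GWAux.int_sq i).const_mul _
  have hq2int : Integrable q2 Pm := by
    refine Integrable.mono' (g := fun x => 1 + ∑ i, γ i * (x i) ^ 2)
      ((integrable_const 1).add hq2sqint) hq2meas (Filter.Eventually.of_forall fun x => ?_)
    rw [Real.norm_eq_abs, abs_of_nonneg (hq2nn x)]
    have ht : 0 ≤ ∑ i, γ i * (x i) ^ 2 :=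
      Finset.sum_nonneg fun i _ => mul_nonneg (hγΓ.1 i).le (sq_nonneg _)
    show Real.sqrt (∑ i, γ i * (x i) ^ 2) ≤ 1 + ∑ i, γ i * (x i) ^ 2
    nlinarith [Real.sq_sqrt ht, Real.sqrt_nonneg (∑ i, γ i * (x i) ^ 2)]
  -- rewrite the gaussian width as an integral over Pm
  have hGW : gaussianWidth S = ∫ x, (⨆ u ∈ S, ⟪e.symm x, u⟫) ∂Pm := by
    rw [gaussianWidth, GaussKol.stdGaussian]
    exact MeasureTheory.integral_map_equiv e.symm _
  -- main integral bound
  have hmain : gaussianWidth S ≤ δ * ∫ x, q1 x ∂Pm + ∫ x, q2 x ∂Pm := by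
    rw [hGW]
    have hint : Integrable (fun x => δ * q1 x + q2 x) Pm := (hq1int.const_mul δ).add hq2int
    calc ∫ x, (⨆ u ∈ S, ⟪e.symm x, u⟫) ∂Pm ≤ ∫ x, (δ * q1 x + q2 x) ∂Pm :=
          integral_mono_of_nonneg (Filter.Eventually.of_forall hFnn) hint
            (Filter.Eventually.of_forall hdom)
      _ = δ * ∫ x, q1 x ∂Pm + ∫ x, q2 x ∂Pm := by
          rw [integral_add (hq1int.const_mul δ) hq2int, integral_const_mul]
  -- second moment of q1
  have hq1sq : ∀ x : Fin d → ℝ, q1 x ^ 2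
      = ∑ j, (∑ i, ((stdOrthonormalBasis ℝ K j : K) : EuclideanSpace ℝ (Fin d)) i * x i) ^ 2 := by
    intro x
    rw [hq1, GWAux2.normsq_proj K (e.symm x)]
    simp only [PiLp.inner_apply, RCLike.inner_apply, conj_trivial, hcoord, mul_comm]
  have hq1sqint : Integrable (fun x => q1 x ^ 2) Pm := by
    have : (fun x : Fin d → ℝ => q1 x ^ 2) = fun x =>
        ∑ j, (∑ i, ((stdOrthonormalBasis ℝ K j : K) : EuclideanSpace ℝ (Fin d)) i * x i) ^ 2 :=
      funext hq1sq
    rw [this]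
    exact integrable_finset_sum _ fun j _ => GWAux2.lin_sq_integrable _
  have hq1sqval : ∫ x, q1 x ^ 2 ∂Pm = (k:ℝ) * m2 := by
    have h1 : (fun x : Fin d → ℝ => q1 x ^ 2) = fun x =>
        ∑ j, (∑ i, ((stdOrthonormalBasis ℝ K j : K) : EuclideanSpace ℝ (Fin d)) i * x i) ^ 2 :=
      funext hq1sq
    rw [h1, integral_finset_sum _ fun j _ => GWAux2.lin_sq_integrable _]
    have h2 : ∀ j, ∫ x : Fin d → ℝ,
        (∑ i, ((stdOrthonormalBasis ℝ K j : K) : EuclideanSpace ℝ (Fin d)) i * x i) ^ 2 ∂Pm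
        = m2 := by
      intro j
      rw [GWAux2.lin_sq_integral]
      have hone : ∑ i, (((stdOrthonormalBasis ℝ K j : K) : EuclideanSpace ℝ (Fin d)) i) ^ 2
          = 1 := by
        have h3 : ∑ i, (((stdOrthonormalBasis ℝ K j : K) : EuclideanSpace ℝ (Fin d)) i) ^ 2
            = ⟪((stdOrthonormalBasis ℝ K j : K) : EuclideanSpace ℝ (Fin d)),
               ((stdOrthonormalBasis ℝ K j : K) : EuclideanSpace ℝ (Fin d))⟫ := by
          rw [PiLp.inner_apply]
          congr 1 with i
          simp [sq]
        rw [h3, real_inner_self_eq_norm_sq, GWAux2.coe_norm_one]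
        norm_num
      rw [hone, one_mul]
    rw [Finset.sum_congr rfl fun j _ => h2 j]
    rw [Finset.sum_const, Finset.card_univ, Fintype.card_fin, nsmul_eq_mul, hK]
  -- second moment of q2
  have hq2sqval : ∫ x, q2 x ^ 2 ∂Pm = (∑ i, γ i) * m2 := by
    have h1 : (fun x : Fin d → ℝ => q2 x ^ 2) = fun x => ∑ i, γ i * (x i) ^ 2 := by
      funext x
      rw [hq2, Real.sq_sqrt (Finset.sum_nonneg fun i _ =>
        mul_nonneg (hγΓ.1 i).le (sq_nonneg _))]
    rw [h1, integral_finset_sum _ fun i _ =>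
      (GWAux2.coord_integrable GWAux.int_sq i).const_mul _]
    have h2 : ∀ i : Fin d, ∫ x : Fin d → ℝ, γ i * (x i) ^ 2 ∂Pm = γ i * m2 := by
      intro i
      rw [integral_const_mul, GWAux2.coord_integral (fun t => t ^ 2) i]
    rw [Finset.sum_congr rfl fun i _ => h2 i]
    rw [← Finset.sum_mul]
  have hq2sqint' : Integrable (fun x => q2 x ^ 2) Pm := by
    have h1 : (fun x : Fin d → ℝ => q2 x ^ 2) = fun x => ∑ i, γ i * (x i) ^ 2 := by
      funext x
      rw [hq2, Real.sq_sqrt (Finset.sum_nonneg fun i _ =>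
        mul_nonneg (hγΓ.1 i).le (sq_nonneg _))]
    rw [h1]; exact hq2sqint
  -- Jensen bounds
  have hJ1 : ∫ x, q1 x ∂Pm ≤ Real.sqrt ((k:ℝ) * m2) := by
    have := GWAux2.jensen_sqrt Pm hq1nn hq1meas hq1sqint
    rwa [hq1sqval] at this
  have hJ2 : ∫ x, q2 x ∂Pm ≤ Real.sqrt ((∑ i, γ i) * m2) := by
    have := GWAux2.jensen_sqrt Pm hq2nn hq2meas hq2sqint'
    rwa [hq2sqval] at this
  -- numerics
  have hb1 : Real.sqrt ((k:ℝ) * m2) ≤ 3 * Real.sqrt k := by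
    have h9 : (k:ℝ) * m2 ≤ (3 * Real.sqrt k) ^ 2 := by
      have : (3 * Real.sqrt k) ^ 2 = 9 * (k:ℝ) := by
        rw [mul_pow, Real.sq_sqrt hk0.le]; ring
      rw [this]; nlinarith [hk0, hm2le, hm20]
    calc Real.sqrt ((k:ℝ) * m2) ≤ Real.sqrt ((3 * Real.sqrt k) ^ 2) := Real.sqrt_le_sqrt h9
      _ = 3 * Real.sqrt k := Real.sqrt_sq (by positivity)
  have hb2 : Real.sqrt ((∑ i, γ i) * m2)
      ≤ 3 * Real.sqrt (|c| + 1) * δ * Real.sqrt k := by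
    have hγnn : 0 ≤ ∑ i, γ i := Finset.sum_nonneg fun i _ => (hγΓ.1 i).le
    have hcabs : |c| = c := abs_of_nonneg hc0
    have h9 : (∑ i, γ i) * m2 ≤ (3 * Real.sqrt (|c| + 1) * δ * Real.sqrt k) ^ 2 := by
      have hrhs : (3 * Real.sqrt (|c| + 1) * δ * Real.sqrt k) ^ 2
          = 9 * (|c| + 1) * δ ^ 2 * (k:ℝ) := by
        rw [mul_pow, mul_pow, mul_pow, Real.sq_sqrt (by positivity), Real.sq_sqrt hk0.le]
        ring
      rw [hrhs, hcabs]
      calc (∑ i, γ i) * m2 ≤ ((c + 1) * δ ^ 2 * k) * 8 := by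
            nlinarith [hγsum, hm2le, hm20, hγnn]
        _ ≤ 9 * (c + 1) * δ ^ 2 * (k:ℝ) := by nlinarith [hc0, sq_nonneg δ, hk0]
    calc Real.sqrt ((∑ i, γ i) * m2)
        ≤ Real.sqrt ((3 * Real.sqrt (|c| + 1) * δ * Real.sqrt k) ^ 2) := Real.sqrt_le_sqrt h9
      _ = 3 * Real.sqrt (|c| + 1) * δ * Real.sqrt k := Real.sqrt_sq (by positivity)
  -- put it all together
  calc gaussianWidth S ≤ δ * ∫ x, q1 x ∂Pm + ∫ x, q2 x ∂Pm := hmain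
    _ ≤ δ * (3 * Real.sqrt k) + 3 * Real.sqrt (|c| + 1) * δ * Real.sqrt k := by
        refine add_le_add ?_ (hJ2.trans hb2)
        exact mul_le_mul_of_nonneg_left (hJ1.trans hb1) hδ.le
    _ = 3 * (1 + Real.sqrt (|c| + 1)) * δ * Real.sqrt k := by ring

/-- **Corollary (regularity implies a clean width bound).**
If for some dimension/projection pair `(k, Π_k)` there is a constant `c` with
`inf_{γ ∈ Γ(θ*, δ, Π_k)} ∑ i γ i ≤ c δ² k` for all `δ > 0`, then there is a constant `c_u`
(depending only on `c`) such that `G(E_{θ*} ∩ B(δ)) ≤ c_u δ √k` for all `δ > 0`. -/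
theorem regular_gaussian_width_upper_bound (c : ℝ) :
    ∃ c_u : ℝ, 0 < c_u ∧
      ∀ (d : ℕ) (μ : Fin d → ℝ), (∀ i, 0 < μ i) → (∀ i j : Fin d, i ≤ j → μ j ≤ μ i) →
        ∀ θs : EuclideanSpace ℝ (Fin d), θs ∈ ellipse μ →
        ∀ k : ℕ, 1 ≤ k → k ≤ d →
        ∀ K : Submodule ℝ (EuclideanSpace ℝ (Fin d)), Module.finrank ℝ K = k →
        (∀ δ : ℝ, 0 < δ →
          sInf ((fun γ : Fin d → ℝ => ∑ i, γ i) '' Gam μ θs δ K) ≤ c * δ ^ 2 * k) →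
        ∀ δ : ℝ, 0 < δ →
          gaussianWidth (shiftedEllipse μ θs ∩ closedBall 0 δ) ≤ c_u * δ * Real.sqrt k :=
  regular_gaussian_width_upper_bound_aux c
end
end

section
/- For every δ > 0, the critical dimension at θ* = 0 satisfies k(0, δ) = min{ k ∈ {1, …, d} : μ_{k+1} ≤ (81/100)·δ² }, with the convention that k(0, δ) = d if the set on the right-hand side is empty (interpreting μ_{d+1} := 0). -/
open MeasureTheory ProbabilityTheory Metric Set Filter
open scoped BigOperators ENNReal NNReal RealInnerProductSpace Classical

noncomputable section

open GaussKol

section AuxCritDim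

variable {d : ℕ}

lemma shiftedEllipse_zero (μ : Fin d → ℝ) : shiftedEllipse μ 0 = ellipse μ := by
  have : (fun θ : EuclideanSpace ℝ (Fin d) => θ - 0) = id := by
    funext θ; simp
  simp [shiftedEllipse, this]

/-- the first `k` standard basis vectors -/
def bvec (d k : ℕ) (hkd : k ≤ d) : Fin k → EuclideanSpace ℝ (Fin d) :=
  fun i => EuclideanSpace.single (Fin.castLE hkd i) 1

lemma bvec_li {k : ℕ} (hkd : k ≤ d) : LinearIndependent ℝ (bvec d k hkd) := by
  have h := (EuclideanSpace.basisFun (Fin d) ℝ).toBasis.linearIndependent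
  have h2 := h.comp (Fin.castLE hkd) (Fin.castLE_injective hkd)
  have he : bvec d k hkd = ⇑(EuclideanSpace.basisFun (Fin d) ℝ).toBasis ∘ Fin.castLE hkd := by
    funext i
    simp [bvec]
  rw [he]; exact h2

/-- span of the first `k` standard basis vectors -/
def spanK (d k : ℕ) (hkd : k ≤ d) : Submodule ℝ (EuclideanSpace ℝ (Fin d)) :=
  Submodule.span ℝ (Set.range (bvec d k hkd))

lemma finrank_spanK {k : ℕ} (hkd : k ≤ d) : Module.finrank ℝ (spanK d k hkd) = k := by
  rw [spanK, finrank_span_eq_card (bvec_li hkd), Fintype.card_fin]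

lemma spanK_apply_eq_zero {k : ℕ} {hkd : k ≤ d} {x : EuclideanSpace ℝ (Fin d)}
    (hx : x ∈ spanK d k hkd) {j : Fin d} (hj : k ≤ (j : ℕ)) : x j = 0 := by
  induction hx using Submodule.span_induction with
  | mem y hy =>
    obtain ⟨i, rfl⟩ := hy
    have hne : j ≠ Fin.castLE hkd i := by
      intro h
      have : (j : ℕ) = (i : ℕ) := by rw [h]; rfl
      have := i.isLt
      omega
    simp [bvec, EuclideanSpace.single_apply, hne]
  | zero => rfl
  | add y z _ _ hy hz => rw [PiLp.add_apply, hy, hz, add_zero]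
  | smul a y _ hy => rw [PiLp.smul_apply, hy, smul_zero]

lemma piLp_sum_apply {ι : Type*} (s : Finset ι) (y : ι → EuclideanSpace ℝ (Fin d)) (j : Fin d) :
    (∑ i ∈ s, y i) j = ∑ i ∈ s, y i j :=
  map_sum (PiLp.projₗ (𝕜 := ℝ) 2 (fun _ : Fin d => ℝ) j) y s

/-- coordinate truncation -/
def truncV (d k : ℕ) (x : EuclideanSpace ℝ (Fin d)) : EuclideanSpace ℝ (Fin d) :=
  WithLp.toLp 2 (fun j => if (j : ℕ) < k then x j else 0)

lemma truncV_apply (k : ℕ) (x : EuclideanSpace ℝ (Fin d)) (j : Fin d) :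
    truncV d k x j = if (j : ℕ) < k then x j else 0 := rfl

lemma trunc_mem_spanK {k : ℕ} (hkd : k ≤ d) (x : EuclideanSpace ℝ (Fin d)) :
    truncV d k x ∈ spanK d k hkd := by
  have hrepr : truncV d k x
      = ∑ i : Fin k, x (Fin.castLE hkd i) • bvec d k hkd i := by
    ext j
    rw [piLp_sum_apply, truncV_apply]
    by_cases hj : (j : ℕ) < k
    · have hjeq : j = Fin.castLE hkd ⟨(j : ℕ), hj⟩ := by
        apply Fin.ext; rfl
      rw [Finset.sum_eq_single (⟨(j : ℕ), hj⟩ : Fin k)]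
      · simp only [PiLp.smul_apply, bvec, EuclideanSpace.single_apply, smul_eq_mul]
        rw [if_pos hj, if_pos hjeq, ← hjeq, mul_one]
      · intro i _ hi
        simp only [PiLp.smul_apply, bvec, EuclideanSpace.single_apply, smul_eq_mul]
        have : j ≠ Fin.castLE hkd i := by
          intro h
          apply hi
          apply Fin.ext
          have : (j : ℕ) = (i : ℕ) := by rw [h]; rfl
          simpa using this.symm
        rw [if_neg this, mul_zero]
      · intro h; exact absurd (Finset.mem_univ _) h
    · rw [if_neg hj]
      apply (Finset.sum_eq_zero _).symm
      intro i _
      simp only [PiLp.smul_apply, bvec, EuclideanSpace.single_apply, smul_eq_mul]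
      have : j ≠ Fin.castLE hkd i := by
        intro h
        have : (j : ℕ) = (i : ℕ) := by rw [h]; rfl
        have := i.isLt
        omega
      rw [if_neg this, mul_zero]
  rw [hrepr]
  exact Submodule.sum_mem _ fun i _ =>
    Submodule.smul_mem _ _ (Submodule.subset_span ⟨i, rfl⟩)

lemma euclid_norm_sq_eq (x : EuclideanSpace ℝ (Fin d)) : ‖x‖ ^ 2 = ∑ j, x j ^ 2 := by
  rw [EuclideanSpace.norm_eq, Real.sq_sqrt (by positivity)]
  congr 1
  funext j
  rw [Real.norm_eq_abs, sq_abs]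

/-- the orthogonal projection onto `spanK` is coordinate truncation -/
lemma proj_spanK_eq {k : ℕ} (hkd : k ≤ d) (θ : EuclideanSpace ℝ (Fin d)) :
    projK (spanK d k hkd) θ = truncV d k θ := by
  unfold projK
  rw [← Submodule.starProjection_apply]
  apply Submodule.eq_starProjection_of_mem_of_inner_eq_zero (trunc_mem_spanK hkd θ)
  intro w hw
  rw [PiLp.inner_apply]
  apply Finset.sum_eq_zero
  intro j _
  by_cases hj : (j : ℕ) < k
  · simp [PiLp.sub_apply, truncV_apply, hj]
  · rw [spanK_apply_eq_zero hw (le_of_not_gt hj)]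
    simp

/-- upper bound on the deflect of the truncation projection over the ellipse -/
lemma norm_sub_proj_spanK_le {k : ℕ} (hkd : k ≤ d) {μ : Fin d → ℝ} (hμpos : ∀ i, 0 < μ i)
    {c : ℝ} (hc : 0 ≤ c) (hk : ∀ j : Fin d, k ≤ (j : ℕ) → μ j ≤ c ^ 2)
    {θ : EuclideanSpace ℝ (Fin d)} (hθ : θ ∈ ellipse μ) :
    ‖θ - projK (spanK d k hkd) θ‖ ≤ c := by
  rw [proj_spanK_eq hkd θ]
  have hsq : ‖θ - truncV d k θ‖ ^ 2 ≤ c ^ 2 := by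
    rw [euclid_norm_sq_eq]
    have hterm : ∀ j : Fin d, (θ - truncV d k θ) j ^ 2 ≤ c ^ 2 * (θ j ^ 2 / μ j) := by
      intro j
      rw [PiLp.sub_apply, truncV_apply]
      by_cases hj : (j : ℕ) < k
      · simp only [hj, if_pos, sub_self]
        have : (0:ℝ) ≤ c ^ 2 * (θ j ^ 2 / μ j) := by
          have := (hμpos j).le
          positivity
        simpa using this
      · simp only [hj, if_neg, not_false_iff, sub_zero]
        have hμj := hμpos j
        have h1 : μ j ≤ c ^ 2 := hk j (le_of_not_gt hj)
        rw [← sub_nonneg]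
        have : c ^ 2 * (θ j ^ 2 / μ j) - θ j ^ 2 = θ j ^ 2 * ((c ^ 2 - μ j) / μ j) := by
          field_simp
        rw [this]
        apply mul_nonneg (sq_nonneg _)
        apply div_nonneg (by linarith) hμj.le
    calc ∑ j, (θ - truncV d k θ) j ^ 2
        ≤ ∑ j, c ^ 2 * (θ j ^ 2 / μ j) := Finset.sum_le_sum fun j _ => hterm j
      _ = c ^ 2 * ∑ j, θ j ^ 2 / μ j := by rw [Finset.mul_sum]
      _ ≤ c ^ 2 * 1 := by
          apply mul_le_mul_of_nonneg_left _ (sq_nonneg c)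
          exact hθ
      _ = c ^ 2 := mul_one _
  calc ‖θ - truncV d k θ‖
      = Real.sqrt (‖θ - truncV d k θ‖ ^ 2) := by rw [Real.sqrt_sq (norm_nonneg _)]
    _ ≤ Real.sqrt (c ^ 2) := Real.sqrt_le_sqrt hsq
    _ = c := Real.sqrt_sq hc

lemma norm_sub_proj_le_norm (K : Submodule ℝ (EuclideanSpace ℝ (Fin d)))
    (θ : EuclideanSpace ℝ (Fin d)) : ‖θ - projK K θ‖ ≤ ‖θ‖ := by
  unfold projK
  rw [← Submodule.starProjection_apply, Submodule.starProjection_minimal]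
  have hb : BddBelow (Set.range fun x : K => ‖θ - (x : EuclideanSpace ℝ (Fin d))‖) := by
    refine ⟨0, ?_⟩
    rintro _ ⟨x, rfl⟩
    positivity
  calc (⨅ x : K, ‖θ - (x : EuclideanSpace ℝ (Fin d))‖)
      ≤ ‖θ - ((⟨0, K.zero_mem⟩ : K) : EuclideanSpace ℝ (Fin d))‖ := ciInf_le hb _
    _ = ‖θ‖ := by simp

end AuxCritDim

/-- **Explicit form of the critical dimension at zero.**
For every `δ > 0`, `k(0, δ) = min{k ∈ {1, …, d} : μ_{k+1} ≤ (81/100) δ²}` (with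
`μ_{d+1} := 0`), with the convention that `k(0, δ) = d` if that set is empty. -/
theorem critDim_zero_eq {d : ℕ} (η : ℝ) (hη0 : 0 < η) (hη1 : η < 0.1)
    (μ : Fin d → ℝ) (hμpos : ∀ i, 0 < μ i) (hμmono : ∀ i j : Fin d, i ≤ j → μ j ≤ μ i)
    (δ : ℝ) (hδ : 0 < δ) :
    critDim η μ 0 δ =
      if ({k : ℕ | 1 ≤ k ∧ k ≤ d ∧
            (if hk : k < d then μ ⟨k, hk⟩ else 0) ≤ 81 / 100 * δ ^ 2}).Nonempty
      then sInf {k : ℕ | 1 ≤ k ∧ k ≤ d ∧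
            (if hk : k < d then μ ⟨k, hk⟩ else 0) ≤ 81 / 100 * δ ^ 2}
      else d := by
  have hη01 : (0.9 : ℝ) < 1 - η := by norm_num at hη1 ⊢; linarith
  set S : Set (EuclideanSpace ℝ (Fin d)) :=
    shiftedEllipse μ 0 ∩ closedBall 0 ((1 - η) * δ) with hS
  have hSsub : ∀ θ ∈ S, θ ∈ ellipse μ ∧ ‖θ‖ ≤ (1 - η) * δ := by
    intro θ hθ
    refine ⟨?_, ?_⟩
    · have := hθ.1; rwa [shiftedEllipse_zero] at this
    · have := hθ.2; rwa [mem_closedBall, dist_zero_right] at this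
  have h9nn : (0 : ℝ) ≤ 9 / 10 * δ := by positivity
  -- bddBelow of the kolWidth infimum range
  have hbddB : ∀ k : ℕ, BddBelow (Set.range fun K :
      {K : Submodule ℝ (EuclideanSpace ℝ (Fin d)) // Module.finrank ℝ K = k} =>
      ⨆ θ ∈ S, ‖θ - projK K.1 θ‖) := by
    intro k
    refine ⟨0, ?_⟩
    rintro _ ⟨K, rfl⟩
    exact Real.iSup_nonneg fun θ => Real.iSup_nonneg fun _ => norm_nonneg _
  -- upper bound: if the tail eigenvalues are small, kolWidth is small
  have hupper : ∀ k : ℕ, k ≤ d → (∀ j : Fin d, k ≤ (j : ℕ) → μ j ≤ 81 / 100 * δ ^ 2) →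
      kolWidth k S ≤ 9 / 10 * δ := by
    intro k hkd hμk
    apply ciInf_le_of_le (hbddB k) ⟨spanK d k hkd, finrank_spanK hkd⟩
    refine Real.iSup_le (fun θ => Real.iSup_le (fun hθ => ?_) h9nn) h9nn
    refine norm_sub_proj_spanK_le hkd hμpos h9nn ?_ (hSsub θ hθ).1
    intro j hj
    calc μ j ≤ 81 / 100 * δ ^ 2 := hμk j hj
      _ = (9 / 10 * δ) ^ 2 := by ring
  -- lower bound
  have hlower : ∀ k : ℕ, (hk : k < d) → 81 / 100 * δ ^ 2 < μ ⟨k, hk⟩ →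
      ¬ kolWidth k S ≤ 9 / 10 * δ := by
    intro k hkd hμk hw
    set ρ : ℝ := min (Real.sqrt (μ ⟨k, hkd⟩)) ((1 - η) * δ) with hρdef
    have hρ : 9 / 10 * δ < ρ := by
      apply lt_min
      · rw [show (9:ℝ)/10 * δ = Real.sqrt ((9/10*δ)^2) by
          rw [Real.sqrt_sq h9nn]]
        apply Real.sqrt_lt_sqrt (by positivity)
        calc (9/10*δ)^2 = 81/100*δ^2 := by ring
          _ < μ ⟨k, hkd⟩ := hμk
      · nlinarith
    have hρpos : 0 < ρ := lt_of_le_of_lt h9nn hρ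
    -- every k-dimensional subspace misses a vector of norm ρ in S
    have hKey : ∀ K : {K : Submodule ℝ (EuclideanSpace ℝ (Fin d)) //
        Module.finrank ℝ K = k}, ρ ≤ ⨆ θ ∈ S, ‖θ - projK K.1 θ‖ := by
      rintro ⟨K, hK⟩
      have hk1d : k + 1 ≤ d := hkd
      set V := spanK d (k + 1) hk1d with hV
      have hVrank : Module.finrank ℝ V = k + 1 := finrank_spanK hk1d
      have hWpos : 0 < Module.finrank ℝ (V ⊓ Kᗮ : Submodule ℝ (EuclideanSpace ℝ (Fin d))) := by
        have h1 := Submodule.finrank_sup_add_finrank_inf_eq V Kᗮ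
        have h2 := Submodule.finrank_add_finrank_orthogonal K
        have h3 : Module.finrank ℝ (EuclideanSpace ℝ (Fin d)) = d := finrank_euclideanSpace_fin
        have h4 : Module.finrank ℝ (V ⊔ Kᗮ : Submodule ℝ (EuclideanSpace ℝ (Fin d))) ≤ d :=
          le_trans (Submodule.finrank_le _) (le_of_eq h3)
        omega
      have : Nontrivial (V ⊓ Kᗮ : Submodule ℝ (EuclideanSpace ℝ (Fin d))) :=
        Module.finrank_pos_iff.mp hWpos
      obtain ⟨w, hw0⟩ := exists_ne (0 : (V ⊓ Kᗮ : Submodule ℝ (EuclideanSpace ℝ (Fin d))))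
      set v : EuclideanSpace ℝ (Fin d) := (w : EuclideanSpace ℝ (Fin d)) with hv
      have hvne : v ≠ 0 := by
        simpa [hv, Submodule.coe_eq_zero] using hw0
      have hvV : v ∈ V := w.2.1
      have hvKo : v ∈ Kᗮ := w.2.2
      have hvnorm : 0 < ‖v‖ := norm_pos_iff.mpr hvne
      set u : EuclideanSpace ℝ (Fin d) := (ρ / ‖v‖) • v with hu
      have hunorm : ‖u‖ = ρ := by
        rw [hu, norm_smul, Real.norm_eq_abs, abs_div, abs_of_nonneg hρpos.le,
          abs_of_nonneg (norm_nonneg v), div_mul_cancel₀ _ (ne_of_gt hvnorm)]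
      have huV : u ∈ V := Submodule.smul_mem _ _ hvV
      have huKo : u ∈ Kᗮ := Submodule.smul_mem _ _ hvKo
      have hproj0 : projK K u = 0 := by
        unfold projK
        rw [Submodule.orthogonalProjectionOnto_apply_of_mem_orthogonal huKo]
        rfl
      have huE : u ∈ ellipse μ := by
        show ∑ j, u j ^ 2 / μ j ≤ 1
        have hterm : ∀ j : Fin d, u j ^ 2 / μ j ≤ u j ^ 2 / μ ⟨k, hkd⟩ := by
          intro j
          by_cases hj : (j : ℕ) ≤ k
          · apply div_le_div_of_nonneg_left (sq_nonneg _) (hμpos _)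
            exact hμmono j ⟨k, hkd⟩ hj
          · have : u j = 0 := spanK_apply_eq_zero huV (by omega)
            simp [this]
        calc ∑ j, u j ^ 2 / μ j ≤ ∑ j, u j ^ 2 / μ ⟨k, hkd⟩ :=
              Finset.sum_le_sum fun j _ => hterm j
          _ = (∑ j, u j ^ 2) / μ ⟨k, hkd⟩ := by rw [Finset.sum_div]
          _ = ρ ^ 2 / μ ⟨k, hkd⟩ := by rw [← euclid_norm_sq_eq, hunorm]
          _ ≤ 1 := by
              rw [div_le_one (hμpos _)]
              have h1 : ρ ≤ Real.sqrt (μ ⟨k, hkd⟩) := min_le_left _ _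
              calc ρ ^ 2 ≤ Real.sqrt (μ ⟨k, hkd⟩) ^ 2 := by
                    apply pow_le_pow_left₀ hρpos.le h1
                _ = μ ⟨k, hkd⟩ := Real.sq_sqrt (hμpos _).le
      have huS : u ∈ S := by
        constructor
        · rw [shiftedEllipse_zero]; exact huE
        · rw [mem_closedBall, dist_zero_right, hunorm]
          exact min_le_right _ _
      have hbddA : BddAbove (Set.range fun θ => ⨆ _ : θ ∈ S, ‖θ - projK K θ‖) := by
        refine ⟨(1 - η) * δ, ?_⟩
        rintro _ ⟨θ, rfl⟩
        refine Real.iSup_le (fun hθ => ?_) (by nlinarith)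
        calc ‖θ - projK K θ‖ ≤ ‖θ‖ := norm_sub_proj_le_norm K θ
          _ ≤ (1 - η) * δ := (hSsub θ hθ).2
      refine le_ciSup_of_le hbddA u ?_
      rw [ciSup_pos huS, hproj0, sub_zero, hunorm]
    have hnon : Nonempty {K : Submodule ℝ (EuclideanSpace ℝ (Fin d)) //
        Module.finrank ℝ K = k} := ⟨⟨spanK d k hkd.le, finrank_spanK hkd.le⟩⟩
    have hge : ρ ≤ kolWidth k S := le_ciInf hKey
    linarith [hw, hge, hρ]
  -- the two index sets coincide
  have hAB : {k : ℕ | 1 ≤ k ∧ k ≤ d ∧ kolWidth k S ≤ 9 / 10 * δ} =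
      {k : ℕ | 1 ≤ k ∧ k ≤ d ∧
        (if hk : k < d then μ ⟨k, hk⟩ else 0) ≤ 81 / 100 * δ ^ 2} := by
    ext k
    simp only [mem_setOf_eq]
    constructor
    · rintro ⟨h1, h2, h3⟩
      refine ⟨h1, h2, ?_⟩
      by_cases hkd : k < d
      · rw [dif_pos hkd]
        by_contra hc
        push_neg at hc
        exact hlower k hkd hc h3
      · rw [dif_neg hkd]; positivity
    · rintro ⟨h1, h2, h3⟩
      refine ⟨h1, h2, ?_⟩
      apply hupper k h2
      intro j hj
      by_cases hkd : k < d
      · rw [dif_pos hkd] at h3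
        calc μ j ≤ μ ⟨k, hkd⟩ := hμmono ⟨k, hkd⟩ j hj
          _ ≤ 81 / 100 * δ ^ 2 := h3
      · exact absurd (lt_of_le_of_lt hj j.isLt) (by omega)
  have hcrit : critDim η μ 0 δ =
      sInf {k : ℕ | 1 ≤ k ∧ k ≤ d ∧
        (if hk : k < d then μ ⟨k, hk⟩ else 0) ≤ 81 / 100 * δ ^ 2} := by
    rw [critDim, ← hS, hAB]
  rw [hcrit]
  by_cases hd : d = 0
  · subst hd
    rw [if_neg]
    · have hempty : {k : ℕ | 1 ≤ k ∧ k ≤ 0 ∧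
          (if hk : k < 0 then μ ⟨k, hk⟩ else 0) ≤ 81 / 100 * δ ^ 2} = ∅ := by
        ext k; simp only [mem_setOf_eq, mem_empty_iff_false, iff_false]
        rintro ⟨h1, h2, _⟩; omega
      rw [hempty, Nat.sInf_empty]
    · rintro ⟨k, h1, h2, _⟩; omega
  · rw [if_pos]
    exact ⟨d, by omega, le_refl d, by rw [dif_neg (lt_irrefl d)]; positivity⟩
end
end
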